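/- arXiv:1806.09437 — 2 statements merged into one kernel-verified Lean document; each statement's English description precedes it below -/
import Mathlib

section
/- Let n ≥ 3, m ≥ 2, ε ∈ (0, 4/(n−2)), and let u be a radial Neumann solution with exactly m−1 interior zeros, with zeros 1 > ρ_1 > … > ρ_{m−1} > 0 and critical points δ_1 = 1 > δ_2 > … > δ_m = 0. Define w(r) := ρ_1^{2(n−2)/(4−ε(n−2))} · u(ρ_1 r) for r ∈ [0,1]. Then w is a radial Dirichlet solution of the same equation with exactly m−2 interior zeros; its zeros in (0,1] are ρ_k/ρ_1 for k = 1,…,m−1 (with ρ_1/ρ_1 = 1) and its critical points in [0,1] are δ_{k+1}/ρ_1 for k = 1,…,m−1. -/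
open Real Set Filter Topology MeasureTheory

noncomputable section

/-- `κ_n = ((n-2)/4) · Γ(n/2)² / Γ(n)`. -/
def kappa (n : ℕ) : ℝ :=
  (((n : ℝ) - 2) / 4) * Real.Gamma ((n : ℝ) / 2) ^ 2 / Real.Gamma (n : ℝ)

/-- `p_ε = (n+2)/(n-2) - ε`. -/
def pEps (n : ℕ) (ε : ℝ) : ℝ := ((n : ℝ) + 2) / ((n : ℝ) - 2) - ε

/-- `u ∈ C²([0,1])` is a radial solution of `-Δu = |u|^{p-1} u` on the unit ball of `ℝⁿ`,
written in the radial variable: `(r^{n-1} u')' = -|u|^{p-1} u · r^{n-1}` on `(0,1]`,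
with `u'(0) = 0`. -/
def IsRadialSolution (n : ℕ) (p : ℝ) (u : ℝ → ℝ) : Prop :=
  ContDiffOn ℝ 2 u (Set.Icc 0 1) ∧ deriv u 0 = 0 ∧
    ∀ r ∈ Set.Ioc (0 : ℝ) 1,
      deriv (fun s => s ^ (n - 1) * deriv u s) r = -(|u r| ^ (p - 1) * u r * r ^ (n - 1))

/-- Radial Dirichlet solution with exactly `m-1` interior zeros, together with the
decreasing enumeration of its zeros `ρ 1 = 1 > ρ 2 > … > ρ m > 0` in `(0,1]` and of its
critical points `1 > δ 1 > … > δ m = 0` in `[0,1]`, interlaced as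
`0 = δ m < ρ m < δ (m-1) < … < δ 1 < ρ 1 = 1`. -/
def DirichletData (n : ℕ) (p : ℝ) (m : ℕ) (u : ℝ → ℝ) (ρ δ : ℕ → ℝ) : Prop :=
  IsRadialSolution n p u ∧ u 1 = 0 ∧ ρ 1 = 1 ∧ δ m = 0 ∧
    (∀ k, 1 ≤ k → k ≤ m → δ k < ρ k) ∧
    (∀ k, 1 ≤ k → k + 1 ≤ m → ρ (k + 1) < δ k) ∧
    {r : ℝ | r ∈ Set.Ioc (0 : ℝ) 1 ∧ u r = 0} = ρ '' Set.Icc 1 m ∧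
    {r : ℝ | r ∈ Set.Icc (0 : ℝ) 1 ∧ deriv u r = 0} = δ '' Set.Icc 1 m

/-- Radial Neumann solution with exactly `m-1` interior zeros, together with the
decreasing enumeration of its zeros `1 > ρ 1 > … > ρ (m-1) > 0` in `(0,1)` and of its
critical points `δ 1 = 1 > δ 2 > … > δ m = 0` in `[0,1]`, interlaced as
`0 = δ m < ρ (m-1) < δ (m-1) < … < ρ 1 < δ 1 = 1`. -/
def NeumannData (n : ℕ) (p : ℝ) (m : ℕ) (u : ℝ → ℝ) (ρ δ : ℕ → ℝ) : Prop :=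
  IsRadialSolution n p u ∧ deriv u 1 = 0 ∧ δ 1 = 1 ∧ δ m = 0 ∧
    (∀ k, 1 ≤ k → k ≤ m - 1 → ρ k < δ k) ∧
    (∀ k, 1 ≤ k → k ≤ m - 1 → δ (k + 1) < ρ k) ∧
    {r : ℝ | r ∈ Set.Ioo (0 : ℝ) 1 ∧ u r = 0} = ρ '' Set.Icc 1 (m - 1) ∧
    {r : ℝ | r ∈ Set.Icc (0 : ℝ) 1 ∧ deriv u r = 0} = δ '' Set.Icc 1 m

/-- A nontrivial radial Dirichlet solution with exactly `m-1` interior zeros. -/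
def DirichletSol (n : ℕ) (p : ℝ) (m : ℕ) (u : ℝ → ℝ) : Prop :=
  IsRadialSolution n p u ∧ u 1 = 0 ∧ (∃ r ∈ Set.Icc (0 : ℝ) 1, u r ≠ 0) ∧
    ∃ Z : Finset ℝ, (Z : Set ℝ) = {r | r ∈ Set.Ioo (0 : ℝ) 1 ∧ u r = 0} ∧ Z.card = m - 1

/-- A nontrivial radial Neumann solution with exactly `m-1` interior zeros. -/
def NeumannSol (n : ℕ) (p : ℝ) (m : ℕ) (u : ℝ → ℝ) : Prop :=
  IsRadialSolution n p u ∧ deriv u 1 = 0 ∧ (∃ r ∈ Set.Icc (0 : ℝ) 1, u r ≠ 0) ∧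
    ∃ Z : Finset ℝ, (Z : Set ℝ) = {r | r ∈ Set.Ioo (0 : ℝ) 1 ∧ u r = 0} ∧ Z.card = m - 1

/-- **Lemma (rescaling, Neumann → Dirichlet).** If `u` is a radial Neumann solution with
exactly `m-1` interior zeros (zeros `ρ`, critical points `δ`), then
`w(r) = ρ 1 ^ (2(n-2)/(4-ε(n-2))) · u(ρ 1 · r)` is a radial Dirichlet solution of the
same equation with exactly `m-2` interior zeros, whose zeros are `ρ k / ρ 1`
(`k = 1,…,m-1`) and whose critical points are `δ (k+1) / ρ 1` (`k = 1,…,m-1`). -/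
theorem neumann_to_dirichlet_rescaling (n m : ℕ) (hn : 3 ≤ n) (hm : 2 ≤ m) (ε : ℝ)
    (hε : ε ∈ Set.Ioo (0 : ℝ) (4 / ((n : ℝ) - 2)))
    (u : ℝ → ℝ) (ρ δ : ℕ → ℝ)
    (h : NeumannData n (pEps n ε) m u ρ δ) :
    DirichletData n (pEps n ε) (m - 1)
      (fun r : ℝ => ρ 1 ^ (2 * ((n : ℝ) - 2) / (4 - ε * ((n : ℝ) - 2))) * u (ρ 1 * r))
      (fun k : ℕ => ρ k / ρ 1) (fun k : ℕ => δ (k + 1) / ρ 1) := by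
  obtain ⟨⟨hu2, hu'0, hode⟩, hu'1, hδ1, hδm, hρδ, hδρ, hzeros, hcrit⟩ := h
  have hn2 : (0:ℝ) < (n:ℝ) - 2 := by
    have : (3:ℝ) ≤ (n:ℝ) := by exact_mod_cast hn
    linarith
  have hden : (0:ℝ) < 4 - ε * ((n:ℝ) - 2) := by
    have h2 := hε.2
    rw [lt_div_iff₀ hn2] at h2
    linarith
  have hm1 : 1 ≤ m - 1 := by omega
  -- basic facts about zeros and critical points
  have hρmem : ∀ k, 1 ≤ k → k ≤ m - 1 → ρ k ∈ Set.Ioo (0:ℝ) 1 ∧ u (ρ k) = 0 := by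
    intro k h1 h2
    have : ρ k ∈ {r : ℝ | r ∈ Set.Ioo (0:ℝ) 1 ∧ u r = 0} := by
      rw [hzeros]; exact ⟨k, ⟨h1, h2⟩, rfl⟩
    exact this
  have hδmem : ∀ k, 1 ≤ k → k ≤ m → δ k ∈ Set.Icc (0:ℝ) 1 ∧ deriv u (δ k) = 0 := by
    intro k h1 h2
    have : δ k ∈ {r : ℝ | r ∈ Set.Icc (0:ℝ) 1 ∧ deriv u r = 0} := by
      rw [hcrit]; exact ⟨k, ⟨h1, h2⟩, rfl⟩
    exact this
  have hρ1pos : 0 < ρ 1 := (hρmem 1 le_rfl hm1).1.1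
  have hρ1lt : ρ 1 < 1 := (hρmem 1 le_rfl hm1).1.2
  have hρ1ne : ρ 1 ≠ 0 := ne_of_gt hρ1pos
  have hδlt : ∀ j, 2 ≤ j → j ≤ m → δ j < ρ 1 := by
    intro j
    induction j with
    | zero => omega
    | succ i ih =>
      intro h2 hjm
      have hstep : δ (i + 1) < ρ i := hδρ i (by omega) (by omega)
      rcases Nat.lt_or_ge i 2 with hi | hi
      · have : i = 1 := by omega
        subst this; exact hstep
      · exact hstep.trans ((hρδ i (by omega) (by omega)).trans (ih hi (by omega)))
  have hρle : ∀ k, 1 ≤ k → k ≤ m - 1 → ρ k ≤ ρ 1 := by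
    intro k h1 h2
    rcases Nat.lt_or_ge k 2 with hk | hk
    · have : k = 1 := by omega
      rw [this]
    · exact ((hρδ k (by omega) h2).trans (hδlt k hk (by omega))).le
  set α : ℝ := 2 * ((n : ℝ) - 2) / (4 - ε * ((n : ℝ) - 2)) with hαdef
  set c : ℝ := ρ 1 ^ α with hcdef
  have hcpos : 0 < c := Real.rpow_pos_of_pos hρ1pos α
  have hcp : c ^ (pEps n ε - 1) = ρ 1 ^ 2 := by
    rw [hcdef, ← Real.rpow_natCast (ρ 1) 2, ← Real.rpow_mul hρ1pos.le]
    congr 1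
    rw [hαdef]
    unfold pEps
    push_cast
    field_simp [hden.ne', hn2.ne']
    have hd' : (4 - (n:ℝ) * ε + ε * 2) ≠ 0 := ne_of_gt (by linarith)
    calc _ = (4 - (n:ℝ) * ε + ε * 2)⁻¹ * (4 - (n:ℝ) * ε + ε * 2) := by ring
      _ = 1 := inv_mul_cancel₀ hd'
  -- differentiability facts about u
  have hudiff : ∀ s ∈ Set.Ioo (0:ℝ) 1, DifferentiableAt ℝ u s := by
    intro s hs
    exact (hu2.differentiableOn (by norm_num)).differentiableAt
      (Icc_mem_nhds hs.1 hs.2)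
  have hu'cont : ContDiffOn ℝ 1 (deriv u) (Set.Ioo 0 1) :=
    (hu2.mono Set.Ioo_subset_Icc_self).deriv_of_isOpen isOpen_Ioo (by norm_num)
  have hFdiff : ∀ s ∈ Set.Ioo (0:ℝ) 1,
      DifferentiableAt ℝ (fun t : ℝ => t ^ (n - 1) * deriv u t) s := by
    intro s hs
    exact (differentiableAt_pow _).mul
      (((hu'cont.differentiableOn (by norm_num)).differentiableAt
        (isOpen_Ioo.mem_nhds hs)))
  -- chain rule
  have hchain : ∀ r : ℝ, ρ 1 * r ∈ Set.Ioo (0:ℝ) 1 →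
      HasDerivAt (fun s : ℝ => c * u (ρ 1 * s)) (c * (deriv u (ρ 1 * r) * ρ 1)) r := by
    intro r hr
    have h1 : HasDerivAt (fun s : ℝ => ρ 1 * s) (ρ 1) r := by
      simpa using (hasDerivAt_id r).const_mul (ρ 1)
    have hu' : HasDerivAt u (deriv u (ρ 1 * r)) (ρ 1 * r) := (hudiff _ hr).hasDerivAt
    exact (hu'.comp r h1).const_mul c
  -- derivative of w at 0 vanishes
  have hw0 : deriv (fun r : ℝ => c * u (ρ 1 * r)) 0 = 0 := by
    by_cases hd : DifferentiableAt ℝ u 0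
    · have h1 : HasDerivAt (fun s : ℝ => ρ 1 * s) (ρ 1) (0:ℝ) := by
        simpa using (hasDerivAt_id (0:ℝ)).const_mul (ρ 1)
      have hu0 : HasDerivAt u (deriv u 0) (ρ 1 * 0) := by simpa using hd.hasDerivAt
      have h2 : HasDerivAt (fun r : ℝ => c * u (ρ 1 * r)) (c * (deriv u 0 * ρ 1)) 0 :=
        (hu0.comp 0 h1).const_mul c
      rw [h2.deriv, hu'0]
      ring
    · have hwd : ¬ DifferentiableAt ℝ (fun r : ℝ => c * u (ρ 1 * r)) 0 := by
        intro hw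
        apply hd
        have hgd : DifferentiableAt ℝ (fun s : ℝ => (ρ 1)⁻¹ * s) (0:ℝ) :=
          differentiableAt_id.const_mul _
        have hw' : DifferentiableAt ℝ (fun r : ℝ => c * u (ρ 1 * r))
            ((fun s : ℝ => (ρ 1)⁻¹ * s) 0) := by simpa using hw
        have h3 := (hw'.comp 0 hgd).const_mul c⁻¹
        have heq : (fun s : ℝ => c⁻¹ * ((fun r : ℝ => c * u (ρ 1 * r)) ∘
            (fun s : ℝ => (ρ 1)⁻¹ * s)) s) = u := by
          funext s
          simp only [Function.comp]
          rw [mul_inv_cancel_left₀ hρ1ne, inv_mul_cancel_left₀ (ne_of_gt hcpos)]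
        rw [heq] at h3
        exact h3
      rw [deriv_zero_of_not_differentiableAt hwd]
  refine ⟨⟨?_, hw0, ?_⟩, ?_, ?_, ?_, ?_, ?_, ?_, ?_⟩
  · -- smoothness
    have hmaps : Set.MapsTo (fun r : ℝ => ρ 1 * r) (Set.Icc 0 1) (Set.Icc 0 1) := by
      intro r hr
      exact ⟨mul_nonneg hρ1pos.le hr.1,
        le_trans (mul_le_of_le_one_right hρ1pos.le hr.2) hρ1lt.le⟩
    exact contDiffOn_const.mul
      (hu2.comp ((contDiff_const.mul contDiff_id).contDiffOn) hmaps)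
  · -- the ODE
    intro r hr
    have hρr : ρ 1 * r ∈ Set.Ioo (0:ℝ) 1 :=
      ⟨mul_pos hρ1pos hr.1, lt_of_le_of_lt (mul_le_of_le_one_right hρ1pos.le hr.2) hρ1lt⟩
    have hrU : r ∈ Set.Ioo (0:ℝ) (1 / ρ 1) :=
      ⟨hr.1, lt_of_le_of_lt hr.2 (one_lt_one_div hρ1pos hρ1lt)⟩
    have hpowρ : ρ 1 ^ (n - 1) = ρ 1 ^ (n - 2) * ρ 1 := by
      rw [← pow_succ]; congr 1; omega
    have heq : ∀ s ∈ Set.Ioo (0:ℝ) (1 / ρ 1),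
        s ^ (n - 1) * deriv (fun t : ℝ => c * u (ρ 1 * t)) s
          = (c / ρ 1 ^ (n - 2)) * ((ρ 1 * s) ^ (n - 1) * deriv u (ρ 1 * s)) := by
      intro s hs
      have hρs : ρ 1 * s ∈ Set.Ioo (0:ℝ) 1 := by
        refine ⟨mul_pos hρ1pos hs.1, ?_⟩
        have := hs.2
        rw [lt_div_iff₀ hρ1pos] at this
        linarith [this]
      rw [(hchain s hρs).deriv, mul_pow, hpowρ]
      field_simp
    have hev : (fun s : ℝ => s ^ (n - 1) * deriv (fun t : ℝ => c * u (ρ 1 * t)) s)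
        =ᶠ[𝓝 r] (fun s : ℝ =>
          (c / ρ 1 ^ (n - 2)) * ((ρ 1 * s) ^ (n - 1) * deriv u (ρ 1 * s))) :=
      Filter.eventuallyEq_of_mem (isOpen_Ioo.mem_nhds hrU) heq
    rw [hev.deriv_eq]
    have h1 : HasDerivAt (fun s : ℝ => ρ 1 * s) (ρ 1) r := by
      simpa using (hasDerivAt_id r).const_mul (ρ 1)
    have hF : HasDerivAt (fun t : ℝ => t ^ (n - 1) * deriv u t)
        (deriv (fun t : ℝ => t ^ (n - 1) * deriv u t) (ρ 1 * r)) (ρ 1 * r) :=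
      (hFdiff _ hρr).hasDerivAt
    have h2 : HasDerivAt (fun s : ℝ =>
        (c / ρ 1 ^ (n - 2)) * ((ρ 1 * s) ^ (n - 1) * deriv u (ρ 1 * s)))
        ((c / ρ 1 ^ (n - 2)) * (deriv (fun t : ℝ => t ^ (n - 1) * deriv u t) (ρ 1 * r) * ρ 1))
        r := (hF.comp r h1).const_mul _
    rw [h2.deriv, hode (ρ 1 * r) ⟨hρr.1, hρr.2.le⟩]
    have habs : |c * u (ρ 1 * r)| ^ (pEps n ε - 1)
        = ρ 1 ^ 2 * |u (ρ 1 * r)| ^ (pEps n ε - 1) := by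
      rw [abs_mul, abs_of_pos hcpos, Real.mul_rpow hcpos.le (abs_nonneg _), hcp]
    rw [habs, mul_pow, hpowρ]
    field_simp
  · -- Dirichlet condition
    have := (hρmem 1 le_rfl hm1).2
    simp [mul_one, this]
  · -- ρ 1 / ρ 1 = 1
    exact div_self hρ1ne
  · -- δ (m-1+1) / ρ 1 = 0
    show δ (m - 1 + 1) / ρ 1 = 0
    rw [show m - 1 + 1 = m by omega, hδm, zero_div]
  · -- interlacing 1
    intro k h1 h2
    exact div_lt_div_of_pos_right (hδρ k h1 h2) hρ1pos
  · -- interlacing 2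
    intro k h1 h2
    exact div_lt_div_of_pos_right (hρδ (k + 1) (by omega) h2) hρ1pos
  · -- zero set
    ext r
    simp only [Set.mem_setOf_eq, Set.mem_image, Set.mem_Icc, Set.mem_Ioc]
    constructor
    · rintro ⟨⟨hr0, hr1⟩, hur⟩
      have hu0 : u (ρ 1 * r) = 0 := by
        rcases mul_eq_zero.mp hur with h' | h'
        · exact absurd h' (ne_of_gt hcpos)
        · exact h'
      have hmem : ρ 1 * r ∈ {x : ℝ | x ∈ Set.Ioo (0:ℝ) 1 ∧ u x = 0} :=
        ⟨⟨mul_pos hρ1pos hr0,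
          lt_of_le_of_lt (mul_le_of_le_one_right hρ1pos.le hr1) hρ1lt⟩, hu0⟩
      rw [hzeros] at hmem
      obtain ⟨k, hk, hkeq⟩ := hmem
      refine ⟨k, hk, ?_⟩
      rw [hkeq, mul_div_cancel_left₀ _ hρ1ne]
    · rintro ⟨k, ⟨hk1, hk2⟩, rfl⟩
      obtain ⟨⟨hkpos, _⟩, hku⟩ := hρmem k hk1 hk2
      refine ⟨⟨div_pos hkpos hρ1pos, (div_le_one hρ1pos).mpr (hρle k hk1 hk2)⟩, ?_⟩
      rw [mul_div_cancel₀ _ hρ1ne, hku, mul_zero]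
  · -- critical point set
    ext r
    simp only [Set.mem_setOf_eq, Set.mem_image, Set.mem_Icc]
    constructor
    · rintro ⟨⟨hr0, hr1⟩, hdr⟩
      rcases eq_or_lt_of_le hr0 with hr0' | hr0'
      · refine ⟨m - 1, ⟨hm1, le_rfl⟩, ?_⟩
        rw [show m - 1 + 1 = m by omega, hδm, zero_div, hr0']
      · have hρr : ρ 1 * r ∈ Set.Ioo (0:ℝ) 1 :=
          ⟨mul_pos hρ1pos hr0', lt_of_le_of_lt (mul_le_of_le_one_right hρ1pos.le hr1) hρ1lt⟩
        have hu'0' : deriv u (ρ 1 * r) = 0 := by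
          have := (hchain r hρr).deriv
          rw [this] at hdr
          have := mul_eq_zero.mp hdr
          rcases this with h' | h'
          · exact absurd h' (ne_of_gt hcpos)
          · rcases mul_eq_zero.mp h' with h'' | h''
            · exact h''
            · exact absurd h'' hρ1ne
        have hmem : ρ 1 * r ∈ {x : ℝ | x ∈ Set.Icc (0:ℝ) 1 ∧ deriv u x = 0} :=
          ⟨⟨hρr.1.le, hρr.2.le⟩, hu'0'⟩
        rw [hcrit] at hmem
        obtain ⟨j, ⟨hj1, hjm⟩, hjeq⟩ := hmem
        have hj2 : 2 ≤ j := by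
          by_contra hj2
          have : j = 1 := by omega
          rw [this, hδ1] at hjeq
          have : ρ 1 * r < 1 := hρr.2
          linarith
        refine ⟨j - 1, ⟨by omega, by omega⟩, ?_⟩
        rw [show j - 1 + 1 = j by omega, hjeq, mul_div_cancel_left₀ _ hρ1ne]
    · rintro ⟨k, ⟨hk1, hk2⟩, rfl⟩
      have hk1m : 1 ≤ k + 1 := by omega
      have hk2m : k + 1 ≤ m := by omega
      obtain ⟨⟨hδnn, _⟩, hδd⟩ := hδmem (k + 1) hk1m hk2m
      have hδlt' : δ (k + 1) < ρ 1 := hδlt (k + 1) (by omega) hk2m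
      refine ⟨⟨div_nonneg hδnn hρ1pos.le, (div_le_one hρ1pos).mpr hδlt'.le⟩, ?_⟩
      rcases eq_or_lt_of_le hδnn with h0 | h0
      · rw [← h0, zero_div]
        exact hw0
      · have hρδr : ρ 1 * (δ (k + 1) / ρ 1) ∈ Set.Ioo (0:ℝ) 1 := by
          rw [mul_div_cancel₀ _ hρ1ne]
          exact ⟨h0, lt_trans hδlt' hρ1lt⟩
        rw [(hchain _ hρδr).deriv, mul_div_cancel₀ _ hρ1ne, hδd]
        ring
end
end

section
/- Let n ≥ 3, m ≥ 2, ε ∈ (0, 4/(n−2)), and let u be a radial Neumann solution with exactly m−1 interior zeros, largest interior zero ρ_1 ∈ (0,1). Then u(1) ≠ 0 and |u(1)|^{4/(n−2)−ε} = (n−2)·ρ_1^{n−2} / ∫_{ρ_1}^{1} |u(s)/u(1)|^{4/(n−2)−ε}·(u(s)/u(1))·s·(s^{n−2} − ρ_1^{n−2}) ds. -/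
open Real Set Filter Topology MeasureTheory

noncomputable section

/-- **Lemma 3.2.** For a radial Neumann solution `u` with exactly `m-1` interior zeros
and largest interior zero `ρ 1`: `u(1) ≠ 0` and
`|u(1)|^{4/(n-2)-ε} = (n-2) ρ₁^{n-2} / ∫_{ρ₁}^1 |u(s)/u(1)|^{4/(n-2)-ε} (u(s)/u(1)) s (s^{n-2}-ρ₁^{n-2}) ds`. -/
theorem neumann_integral_identity (n m : ℕ) (hn : 3 ≤ n) (hm : 2 ≤ m) (ε : ℝ)
    (hε : ε ∈ Set.Ioo (0 : ℝ) (4 / ((n : ℝ) - 2)))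
    (u : ℝ → ℝ) (ρ δ : ℕ → ℝ)
    (h : NeumannData n (pEps n ε) m u ρ δ) :
    u 1 ≠ 0 ∧
    |u 1| ^ ((4 : ℝ) / ((n : ℝ) - 2) - ε) =
      ((n : ℝ) - 2) * ρ 1 ^ (n - 2) /
        ∫ s in (ρ 1)..1,
          |u s / u 1| ^ ((4 : ℝ) / ((n : ℝ) - 2) - ε) * (u s / u 1) * s *
            (s ^ (n - 2) - ρ 1 ^ (n - 2)) := by
  obtain ⟨hsol, hu'1, hδ1, hδm, hρδ, hδρ, hzeros, hcrit⟩ := h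
  obtain ⟨hC, -, hODE⟩ := hsol
  obtain ⟨k, rfl⟩ : ∃ k, n = k + 3 := ⟨n - 3, by omega⟩
  simp only [show k + 3 - 2 = k + 1 from rfl, show k + 3 - 1 = k + 2 from rfl] at *
  have hcast : ((k + 3 : ℕ) : ℝ) - 2 = (k : ℝ) + 1 := by push_cast; ring
  rw [hcast] at hε ⊢
  set ρ1 := ρ 1 with hρ1def
  -- ρ1 is a zero of u in (0,1)
  have hmem : ρ1 ∈ {r : ℝ | r ∈ Set.Ioo (0:ℝ) 1 ∧ u r = 0} := by
    rw [hzeros]; exact ⟨1, Set.mem_Icc.2 ⟨le_refl 1, by omega⟩, rfl⟩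
  obtain ⟨⟨hρ1pos, hρ1lt⟩, huρ1⟩ := hmem
  -- δ j < ρ1 for 2 ≤ j ≤ m
  have hδlt : ∀ j, 2 ≤ j → j ≤ m → δ j < ρ1 := by
    intro j h2
    induction j, h2 using Nat.le_induction with
    | base => intro _; simpa using hδρ 1 le_rfl (by omega)
    | succ j hj ih =>
      intro hjm
      have h1 : δ (j+1) < ρ j := hδρ j (by omega) (by omega)
      have h2' : ρ j < δ j := hρδ j (by omega) (by omega)
      exact h1.trans (h2'.trans (ih (by omega)))
  -- no critical points in (ρ1, 1)
  have hnocrit : ∀ x ∈ Set.Ioo ρ1 1, deriv u x ≠ 0 := by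
    intro x hx hdx
    have hxmem : x ∈ {r : ℝ | r ∈ Set.Icc (0:ℝ) 1 ∧ deriv u r = 0} :=
      ⟨⟨(hρ1pos.trans hx.1).le, hx.2.le⟩, hdx⟩
    rw [hcrit] at hxmem
    obtain ⟨j, hj, rfl⟩ := hxmem
    rw [Set.mem_Icc] at hj
    rcases eq_or_lt_of_le hj.1 with hj1 | hj1
    · rw [← hj1, hδ1] at hx; exact lt_irrefl 1 hx.2
    · exact absurd hx.1 (not_lt.2 (hδlt j hj1 hj.2).le)
  have hCu : ContinuousOn u (Set.Icc (0:ℝ) 1) := hC.continuousOn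
  have hsubI : Set.Icc ρ1 1 ⊆ Set.Icc (0:ℝ) 1 := Set.Icc_subset_Icc hρ1pos.le le_rfl
  -- u 1 ≠ 0 via Rolle
  have hu1 : u 1 ≠ 0 := by
    intro h0
    obtain ⟨c, hc, hc0⟩ := exists_deriv_eq_zero hρ1lt (hCu.mono hsubI) (by rw [huρ1, h0])
    exact hnocrit c hc hc0
  refine ⟨hu1, ?_⟩
  -- abbreviations
  set q : ℝ := pEps (k+3) ε - 1 with hqdef
  have hk1 : ((k:ℝ) + 1) ≠ 0 := by positivity
  have hqeq : q = 4 / ((k:ℝ) + 1) - ε := by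
    rw [hqdef]; unfold pEps; rw [hcast]; push_cast; field_simp; ring
  have hq0 : 0 ≤ q := by
    rw [hqeq]
    have := hε.2
    linarith
  set f : ℝ → ℝ := fun s => |u s| ^ q * u s * s ^ (k + 2) with hfdef
  set w : ℝ → ℝ := fun s => s ^ (k + 2) * deriv u s with hwdef
  have hODE' : ∀ r ∈ Set.Ioc (0:ℝ) 1, deriv w r = -f r := fun r hr => hODE r hr
  have hxne : ∀ x ∈ Set.Icc ρ1 1, x ≠ 0 := fun x hx => (hρ1pos.trans_le hx.1).ne'
  have hfcont : ContinuousOn f (Set.Icc ρ1 1) := by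
    have h1 : ContinuousOn u (Set.Icc ρ1 1) := hCu.mono hsubI
    exact ((h1.abs.rpow_const (fun x _ => Or.inr hq0)).mul h1).mul (continuous_pow _).continuousOn
  -- differentiability facts on the open interval
  have hC1 : ContDiffOn ℝ 1 (derivWithin u (Set.Icc 0 1)) (Set.Icc (0:ℝ) 1) :=
    hC.derivWithin (uniqueDiffOn_Icc one_pos) (by norm_num)
  have hdu_diff : ∀ x ∈ Set.Ioo (0:ℝ) 1, DifferentiableAt ℝ u x := fun x hx =>
    ((hC.differentiableOn two_ne_zero) x ⟨hx.1.le, hx.2.le⟩).differentiableAt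
      (Icc_mem_nhds hx.1 hx.2)
  have hdu2 : ∀ x ∈ Set.Ioo (0:ℝ) 1, DifferentiableAt ℝ (deriv u) x := by
    intro x hx
    have h1 : DifferentiableAt ℝ (derivWithin u (Set.Icc 0 1)) x :=
      ((hC1.differentiableOn one_ne_zero) x ⟨hx.1.le, hx.2.le⟩).differentiableAt
        (Icc_mem_nhds hx.1 hx.2)
    refine h1.congr_of_eventuallyEq ?_
    filter_upwards [Ioo_mem_nhds hx.1 hx.2] with y hy
    exact (derivWithin_of_mem_nhds (Icc_mem_nhds hy.1 hy.2)).symm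
  have hw_diff : ∀ x ∈ Set.Ioo (0:ℝ) 1, DifferentiableAt ℝ w x := fun x hx =>
    (differentiableAt_pow _).mul (hdu2 x hx)
  have hf1ne : f 1 ≠ 0 := by
    have : (0:ℝ) < |u 1| ^ q := Real.rpow_pos_of_pos (abs_pos.2 hu1) q
    simp only [hfdef, one_pow, mul_one]
    exact mul_ne_zero this.ne' hu1
  have hw1_diff : DifferentiableAt ℝ w 1 := by
    by_contra hnd
    have h0 : deriv w 1 = 0 := deriv_zero_of_not_differentiableAt hnd
    have h1 := hODE' 1 ⟨one_pos, le_rfl⟩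
    rw [h0] at h1
    exact hf1ne (neg_eq_zero.1 h1.symm)
  have hwD : ∀ x ∈ Set.Icc ρ1 1, HasDerivAt w (-f x) x := by
    intro x hx
    have hdiff : DifferentiableAt ℝ w x := by
      rcases eq_or_lt_of_le hx.2 with hx1 | hx1
      · rw [hx1]; exact hw1_diff
      · exact hw_diff x ⟨hρ1pos.trans_le hx.1, hx1⟩
    have h2 := hdiff.hasDerivAt
    rwa [hODE' x ⟨hρ1pos.trans_le hx.1, hx.2⟩] at h2
  have hwcont : ContinuousOn w (Set.Icc ρ1 1) := fun x hx =>
    ((hwD x hx).differentiableAt.continuousAt).continuousWithinAt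
  have hw1 : w 1 = 0 := by simp [hwdef, hu'1]
  -- Step 1: w r = ∫ s in r..1, f s
  have hwF : ∀ r ∈ Set.Icc ρ1 1, w r = ∫ s in r..1, f s := by
    intro r hr
    have hsub2 : Set.uIcc r 1 ⊆ Set.Icc ρ1 1 := by
      rw [Set.uIcc_of_le hr.2]; exact Set.Icc_subset_Icc hr.1 le_rfl
    have key := intervalIntegral.integral_eq_sub_of_hasDerivAt
      (f := w) (f' := fun s => -f s) (fun x hx => hwD x (hsub2 hx))
      ((hfcont.mono hsub2).neg.intervalIntegrable)
    rw [intervalIntegral.integral_neg, hw1] at key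
    linarith
  -- deriv u = w x / x^(k+2) on [ρ1, 1]
  have hdeq : ∀ x ∈ Set.Icc ρ1 1, deriv u x = w x / x ^ (k+2) := by
    intro x hx
    rw [hwdef]
    rw [mul_div_cancel_left₀ _ (pow_ne_zero _ (hxne x hx))]
  have hducont : ContinuousOn (deriv u) (Set.Icc ρ1 1) :=
    (hwcont.div (continuous_pow _).continuousOn
      (fun x hx => pow_ne_zero _ (hxne x hx))).congr hdeq
  -- Step 2: FTC for u
  have hstep2 : ∫ x in ρ1..1, deriv u x = u 1 - u ρ1 :=
    intervalIntegral.integral_eq_sub_of_hasDeriv_right_of_le hρ1lt.le (hCu.mono hsubI)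
      (fun x hx => ((hdu_diff x ⟨hρ1pos.trans hx.1, hx.2⟩).hasDerivAt).hasDerivWithinAt)
      ((by rwa [Set.uIcc_of_le hρ1lt.le] :
        ContinuousOn (deriv u) (Set.uIcc ρ1 1)).intervalIntegrable)
  -- Step 3: integration by parts with A
  set A : ℝ → ℝ := fun x => ((ρ1 ^ (k+1))⁻¹ - (x ^ (k+1))⁻¹) / ((k:ℝ) + 1) with hAdef
  have hA : ∀ x ∈ Set.Icc ρ1 1, HasDerivAt A ((x ^ (k+2))⁻¹) x := by
    intro x hx
    have hx0 : x ≠ 0 := hxne x hx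
    have h1 : HasDerivAt (fun y : ℝ => y ^ (k+1)) (((k:ℝ)+1) * x ^ k) x := by
      simpa using hasDerivAt_pow (k+1) x
    have h2 : HasDerivAt (fun y : ℝ => (y ^ (k+1))⁻¹)
        (-(((k:ℝ)+1) * x ^ k) / (x ^ (k+1))^2) x := h1.inv (pow_ne_zero _ hx0)
    have h3 := ((hasDerivAt_const x ((ρ1 ^ (k+1))⁻¹)).sub h2).div_const ((k:ℝ)+1)
    convert h3 using 1
    · rfl
    · rfl
    · rfl
    field_simp
    ring
  have hΦ : ∀ x ∈ Set.Icc ρ1 1,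
      HasDerivAt (fun y => A y * w y) ((x ^ (k+2))⁻¹ * w x + A x * (-f x)) x :=
    fun x hx => (hA x hx).mul (hwD x hx)
  have hinvcont : ContinuousOn (fun x : ℝ => (x ^ (k+2))⁻¹) (Set.Icc ρ1 1) :=
    (continuous_pow _).continuousOn.inv₀ (fun x hx => pow_ne_zero _ (hxne x hx))
  have hAcont : ContinuousOn A (Set.Icc ρ1 1) :=
    (continuousOn_const.sub ((continuous_pow _).continuousOn.inv₀
      (fun x hx => pow_ne_zero _ (hxne x hx)))).div_const _
  have hint1 : IntervalIntegrable (fun x => (x ^ (k+2))⁻¹ * w x) volume ρ1 1 := by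
    apply ContinuousOn.intervalIntegrable
    rw [Set.uIcc_of_le hρ1lt.le]
    exact hinvcont.mul hwcont
  have hint2 : IntervalIntegrable (fun x => A x * (-f x)) volume ρ1 1 := by
    apply ContinuousOn.intervalIntegrable
    rw [Set.uIcc_of_le hρ1lt.le]
    exact hAcont.mul hfcont.neg
  have hint3 : IntervalIntegrable (fun x => A x * f x) volume ρ1 1 := by
    apply ContinuousOn.intervalIntegrable
    rw [Set.uIcc_of_le hρ1lt.le]
    exact hAcont.mul hfcont
  have hIBP := intervalIntegral.integral_eq_sub_of_hasDerivAt
      (f := fun y => A y * w y) (f' := fun x => (x ^ (k+2))⁻¹ * w x + A x * (-f x))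
      (fun x hx => hΦ x (by rwa [Set.uIcc_of_le hρ1lt.le] at hx))
      (hint1.add hint2)
  rw [intervalIntegral.integral_add hint1 hint2] at hIBP
  have hAρ1 : A ρ1 = 0 := by simp [hAdef]
  simp only [hw1, hAρ1, mul_zero, zero_mul, sub_zero] at hIBP
  have hneg : ∫ x in ρ1..1, A x * (-f x) = -∫ x in ρ1..1, A x * f x := by
    rw [← intervalIntegral.integral_neg]
    apply intervalIntegral.integral_congr
    intro x hx
    ring
  rw [hneg] at hIBP
  -- key identity : u 1 = ∫ A f
  have hkey : u 1 = ∫ x in ρ1..1, A x * f x := by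
    have hcongr : ∫ x in ρ1..1, (x ^ (k+2))⁻¹ * w x = ∫ x in ρ1..1, deriv u x := by
      apply intervalIntegral.integral_congr
      intro x hx
      rw [Set.uIcc_of_le hρ1lt.le] at hx
      rw [hdeq x hx, div_eq_inv_mul]
    rw [hcongr, hstep2, huρ1, sub_zero] at hIBP
    linarith
  -- rewrite A f
  set J : ℝ := ∫ x in ρ1..1, |u x| ^ q * u x * x * (x ^ (k+1) - ρ1 ^ (k+1)) with hJdef
  have hρ0 : ρ1 ≠ 0 := hρ1pos.ne'
  have hkey2 : u 1 = (ρ1 ^ (k+1))⁻¹ / ((k:ℝ)+1) * J := by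
    rw [hkey, hJdef, ← intervalIntegral.integral_const_mul]
    apply intervalIntegral.integral_congr
    intro x hx
    rw [Set.uIcc_of_le hρ1lt.le] at hx
    have hx0 : x ≠ 0 := hxne x hx
    simp only [hAdef, hfdef]
    field_simp
    ring
  have hJ : J = (((k:ℝ)+1) * ρ1 ^ (k+1)) * u 1 := by
    rw [hkey2]
    field_simp
  -- the statement integral
  have hu1q : (0:ℝ) < |u 1| ^ q := Real.rpow_pos_of_pos (abs_pos.2 hu1) q
  have hIeq : (∫ s in ρ1..1, |u s / u 1| ^ q * (u s / u 1) * s *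
      (s ^ (k+1) - ρ1 ^ (k+1))) = (|u 1| ^ q * u 1)⁻¹ * J := by
    rw [hJdef, ← intervalIntegral.integral_const_mul]
    apply intervalIntegral.integral_congr
    intro x hx
    simp only [abs_div]
    rw [Real.div_rpow (abs_nonneg _) (abs_nonneg _)]
    field_simp
  rw [← hqeq, hIeq, hJ]
  have h2 : ρ1 ^ (k+1) ≠ 0 := pow_ne_zero _ hρ0
  field_simp
end
end
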